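/- Let W and W̃ be d-dimensional subspaces of ℝⁿ with ‖proj(W) − proj(W̃)‖_F ≤ 1. Then there exist matrices W, W̃ ∈ ℝ^{n×d} with orthonormal columns spanning W and W̃ respectively such that W̃ = W + Γ with ‖Γ‖_F ≤ O(d · ‖proj(W̃) − proj(W)‖_F). -/

import Mathlib

open Matrix

/-- The matrix (in the standard basis) of the orthogonal projection onto a
subspace `U ≤ ℝⁿ`. -/
noncomputable def projMat (n : ℕ) (U : Submodule ℝ (EuclideanSpace ℝ (Fin n))) :
    Matrix (Fin n) (Fin n) ℝ := fun i j =>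
  (U.subtypeL.comp U.orthogonalProjectionOnto) (EuclideanSpace.single j 1) i

/-- The Frobenius norm of a real matrix. -/
noncomputable def frobNorm {a b : ℕ} (M : Matrix (Fin a) (Fin b) ℝ) : ℝ :=
  Real.sqrt (∑ i, ∑ j, M i j ^ 2)

attribute [local instance] Matrix.frobeniusSeminormedAddCommGroup

lemma frobNorm_eq {a b : ℕ} (M : Matrix (Fin a) (Fin b) ℝ) : frobNorm M = ‖M‖ := by
  rw [Matrix.frobenius_norm_def, frobNorm, Real.sqrt_eq_rpow]
  congr 1
  refine Finset.sum_congr rfl fun i _ => Finset.sum_congr rfl fun j _ => ?_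
  rw [Real.rpow_two, Real.norm_eq_abs, sq_abs]

lemma frobNorm_nonneg {a b : ℕ} (M : Matrix (Fin a) (Fin b) ℝ) : 0 ≤ frobNorm M :=
  Real.sqrt_nonneg _

lemma sq_frobNorm {a b : ℕ} (M : Matrix (Fin a) (Fin b) ℝ) :
    frobNorm M ^ 2 = ∑ i, ∑ j, M i j ^ 2 :=
  Real.sq_sqrt (Finset.sum_nonneg fun _ _ => Finset.sum_nonneg fun _ _ => sq_nonneg _)

lemma trace_transpose_mul {a b : ℕ} (M : Matrix (Fin a) (Fin b) ℝ) :
    Matrix.trace (Mᵀ * M) = ∑ i, ∑ j, M i j ^ 2 := by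
  rw [Matrix.trace]
  simp only [Matrix.diag_apply, Matrix.mul_apply, Matrix.transpose_apply]
  rw [Finset.sum_comm]
  exact Finset.sum_congr rfl fun i _ => Finset.sum_congr rfl fun j _ => (sq (M i j)).symm ▸ (pow_two (M i j)).symm ▸ (by ring)

lemma frobNorm_mul_le {a b c : ℕ} (A : Matrix (Fin a) (Fin b) ℝ) (B : Matrix (Fin b) (Fin c) ℝ) :
    frobNorm (A * B) ≤ frobNorm A * frobNorm B := by
  simp only [frobNorm_eq]; exact Matrix.frobenius_norm_mul A B

lemma frobNorm_transpose {a b : ℕ} (M : Matrix (Fin a) (Fin b) ℝ) :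
    frobNorm Mᵀ = frobNorm M := by
  simp only [frobNorm_eq]; exact Matrix.frobenius_norm_transpose M

lemma frobNorm_left_orth {n d a : ℕ} {B : Matrix (Fin n) (Fin d) ℝ} (hB : Bᵀ * B = 1)
    (M : Matrix (Fin d) (Fin a) ℝ) : frobNorm (B * M) = frobNorm M := by
  rw [frobNorm, frobNorm, ← trace_transpose_mul, ← trace_transpose_mul,
    Matrix.transpose_mul, Matrix.mul_assoc, ← Matrix.mul_assoc Bᵀ, hB, Matrix.one_mul]

lemma frobNorm_conj {d : ℕ} {Q : Matrix (Fin d) (Fin d) ℝ} (hQ1 : Qᵀ * Q = 1)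
    (M : Matrix (Fin d) (Fin d) ℝ) : frobNorm (Q * M * Qᵀ) = frobNorm M := by
  have h1 : Q * M * Qᵀ = Q * (M * Qᵀ) := by rw [Matrix.mul_assoc]
  rw [h1, frobNorm_left_orth hQ1, ← frobNorm_transpose, Matrix.transpose_mul,
    Matrix.transpose_transpose, frobNorm_left_orth hQ1, frobNorm_transpose]

lemma frobNorm_diagonal {d : ℕ} (v : Fin d → ℝ) :
    frobNorm (Matrix.diagonal v) = Real.sqrt (∑ i, v i ^ 2) := by
  rw [frobNorm]
  congr 1
  refine Finset.sum_congr rfl fun i _ => ?_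
  rw [Finset.sum_eq_single i]
  · simp [Matrix.diagonal_apply_eq]
  · intro j _ hj; simp [Matrix.diagonal_apply, Ne.symm hj]
  · simp

lemma frobNorm_one {d : ℕ} : frobNorm (1 : Matrix (Fin d) (Fin d) ℝ) = Real.sqrt d := by
  rw [← Matrix.diagonal_one, frobNorm_diagonal]
  simp

lemma frobNorm_add_le {a b : ℕ} (A B : Matrix (Fin a) (Fin b) ℝ) :
    frobNorm (A + B) ≤ frobNorm A + frobNorm B := by
  simp only [frobNorm_eq]; exact norm_add_le _ _

lemma frobNorm_sub_le {a b : ℕ} (A B : Matrix (Fin a) (Fin b) ℝ) :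
    frobNorm (A - B) ≤ frobNorm A + frobNorm B := by
  simp only [frobNorm_eq]; exact norm_sub_le _ _

noncomputable def vnorm {m : ℕ} (y : Fin m → ℝ) : ℝ := Real.sqrt (∑ i, y i ^ 2)

lemma vnorm_eq {m : ℕ} (y : Fin m → ℝ) :
    vnorm y = ‖((WithLp.equiv 2 (Fin m → ℝ)).symm y : EuclideanSpace ℝ (Fin m))‖ := by
  rw [EuclideanSpace.norm_eq, vnorm]
  congr 1
  refine Finset.sum_congr rfl fun i _ => ?_
  rw [Real.norm_eq_abs, sq_abs]
  rfl

lemma vnorm_nonneg {m : ℕ} (y : Fin m → ℝ) : 0 ≤ vnorm y := Real.sqrt_nonneg _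

lemma sq_vnorm {m : ℕ} (y : Fin m → ℝ) : vnorm y ^ 2 = ∑ i, y i ^ 2 :=
  Real.sq_sqrt (Finset.sum_nonneg fun _ _ => sq_nonneg _)

lemma vnorm_lower {m : ℕ} (y z : Fin m → ℝ) : vnorm z - vnorm (z - y) ≤ vnorm y := by
  simp only [vnorm_eq]
  have h := norm_sub_norm_le ((WithLp.equiv 2 (Fin m → ℝ)).symm z)
    ((WithLp.equiv 2 (Fin m → ℝ)).symm z - (WithLp.equiv 2 (Fin m → ℝ)).symm y)
  simpa using h

/-- operator-type bound: `‖M *ᵥ y‖ ≤ ‖M‖_F ‖y‖`. -/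
lemma vnorm_mulVec_le {a b : ℕ} (M : Matrix (Fin a) (Fin b) ℝ) (y : Fin b → ℝ) :
    vnorm (M *ᵥ y) ≤ frobNorm M * vnorm y := by
  have h : ∑ i, (M *ᵥ y) i ^ 2 ≤ (∑ i, ∑ j, M i j ^ 2) * ∑ j, y j ^ 2 := by
    rw [Finset.sum_mul]
    refine Finset.sum_le_sum fun i _ => ?_
    exact Finset.sum_mul_sq_le_sq_mul_sq Finset.univ (fun j => M i j) y
  calc vnorm (M *ᵥ y) = Real.sqrt (∑ i, (M *ᵥ y) i ^ 2) := rfl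
    _ ≤ Real.sqrt ((∑ i, ∑ j, M i j ^ 2) * ∑ j, y j ^ 2) := Real.sqrt_le_sqrt h
    _ = frobNorm M * vnorm y := by
        rw [Real.sqrt_mul (by positivity)]
        rfl

noncomputable def colE {n d : ℕ} (B : Matrix (Fin n) (Fin d) ℝ) (j : Fin d) :
    EuclideanSpace ℝ (Fin n) := (WithLp.equiv 2 (Fin n → ℝ)).symm (fun i => B i j)

lemma transpose_mul_apply_eq_inner {n d : ℕ} (B : Matrix (Fin n) (Fin d) ℝ) (j k : Fin d) :
    (Bᵀ * B) j k = inner ℝ (colE B j) (colE B k) := by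
  rw [Matrix.mul_apply]
  rw [PiLp.inner_apply]
  simp [colE, Matrix.transpose_apply, RCLike.inner_apply, mul_comm]

lemma orthonormal_colE {n d : ℕ} {B : Matrix (Fin n) (Fin d) ℝ} (hB : Bᵀ * B = 1) :
    Orthonormal ℝ (colE B) := by
  rw [orthonormal_iff_ite]
  intro i j
  rw [← transpose_mul_apply_eq_inner, hB, Matrix.one_apply]

lemma transpose_mul_eq_one {n d : ℕ} {B : Matrix (Fin n) (Fin d) ℝ}
    (hB : Orthonormal ℝ (colE B)) : Bᵀ * B = 1 := by
  ext j k
  rw [transpose_mul_apply_eq_inner, orthonormal_iff_ite.mp hB, Matrix.one_apply]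

lemma decomp_single {n : ℕ} (x : EuclideanSpace ℝ (Fin n)) :
    ∑ j, x j • (EuclideanSpace.single j (1:ℝ)) = x := by
  ext i
  simp only [PiLp.smul_apply, EuclideanSpace.single_apply, smul_eq_mul, mul_ite, mul_one, mul_zero]
  rw [WithLp.ofLp_sum, Finset.sum_apply]
  simp [EuclideanSpace.single_apply]

lemma projMat_mulVec {n : ℕ} (U : Submodule ℝ (EuclideanSpace ℝ (Fin n)))
    (x : EuclideanSpace ℝ (Fin n)) :
    projMat n U *ᵥ (x : Fin n → ℝ) =
      ((U.subtypeL.comp U.orthogonalProjectionOnto) x : Fin n → ℝ) := by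
  funext i
  simp only [Matrix.mulVec, dotProduct]
  have : x = ∑ j, x j • (EuclideanSpace.single j (1:ℝ)) := (decomp_single x).symm
  conv_rhs => rw [this]
  rw [map_sum]
  rw [WithLp.ofLp_sum, Finset.sum_apply]
  refine Finset.sum_congr rfl fun j _ => ?_
  rw [_root_.map_smul]
  simp [projMat, mul_comm]

lemma projMat_mem {n : ℕ} (U : Submodule ℝ (EuclideanSpace ℝ (Fin n)))
    (x : EuclideanSpace ℝ (Fin n)) :
    ((WithLp.equiv 2 (Fin n → ℝ)).symm (projMat n U *ᵥ (x : Fin n → ℝ))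
      : EuclideanSpace ℝ (Fin n)) ∈ U := by
  rw [projMat_mulVec]
  exact (U.orthogonalProjectionOnto x).2

lemma projMat_fix {n : ℕ} (U : Submodule ℝ (EuclideanSpace ℝ (Fin n)))
    (x : EuclideanSpace ℝ (Fin n)) (hx : x ∈ U) :
    projMat n U *ᵥ (x : Fin n → ℝ) = x := by
  rw [projMat_mulVec]
  simp only [Submodule.subtypeL_apply, ContinuousLinearMap.coe_comp', Function.comp_apply]
  exact congrArg WithLp.ofLp (U.starProjection_eq_self_iff.mpr hx)

lemma span_colE_eq {n d : ℕ} (U : Submodule ℝ (EuclideanSpace ℝ (Fin n)))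
    {B : Matrix (Fin n) (Fin d) ℝ} (hB : Bᵀ * B = 1)
    (hmem : ∀ j, colE B j ∈ U) (hrank : Module.finrank ℝ U = d) :
    Submodule.span ℝ (Set.range (colE B)) = U := by
  have hle : Submodule.span ℝ (Set.range (colE B)) ≤ U := by
    rw [Submodule.span_le]
    rintro _ ⟨j, rfl⟩
    exact hmem j
  have hli : LinearIndependent ℝ (colE B) := (orthonormal_colE hB).linearIndependent
  have hfr : Module.finrank ℝ (Submodule.span ℝ (Set.range (colE B))) = d := by
    rw [finrank_span_eq_card hli, Fintype.card_fin]
  exact (Submodule.eq_of_le_of_finrank_le hle (by rw [hfr, hrank])).symm ▸ rfl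

noncomputable def bmat {n d : ℕ} (U : Submodule ℝ (EuclideanSpace ℝ (Fin n)))
    (hU : Module.finrank ℝ U = d) : Matrix (Fin n) (Fin d) ℝ :=
  fun i j => (((stdOrthonormalBasis ℝ U).reindex (finCongr hU)) j : EuclideanSpace ℝ (Fin n)) i

lemma colE_bmat {n d : ℕ} (U : Submodule ℝ (EuclideanSpace ℝ (Fin n)))
    (hU : Module.finrank ℝ U = d) (j : Fin d) :
    colE (bmat U hU) j = (((stdOrthonormalBasis ℝ U).reindex (finCongr hU)) j
      : EuclideanSpace ℝ (Fin n)) := rfl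

lemma bmat_mem {n d : ℕ} (U : Submodule ℝ (EuclideanSpace ℝ (Fin n)))
    (hU : Module.finrank ℝ U = d) (j : Fin d) : colE (bmat U hU) j ∈ U := by
  rw [colE_bmat]; exact (((stdOrthonormalBasis ℝ U).reindex (finCongr hU)) j).2

lemma bmat_orth {n d : ℕ} (U : Submodule ℝ (EuclideanSpace ℝ (Fin n)))
    (hU : Module.finrank ℝ U = d) : (bmat U hU)ᵀ * bmat U hU = 1 := by
  apply transpose_mul_eq_one
  have h := (((stdOrthonormalBasis ℝ U).reindex (finCongr hU))).orthonormal
  rw [orthonormal_iff_ite] at h ⊢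
  intro i j
  rw [colE_bmat, colE_bmat, ← Submodule.coe_inner, h]

lemma bmat_span {n d : ℕ} (U : Submodule ℝ (EuclideanSpace ℝ (Fin n)))
    (hU : Module.finrank ℝ U = d) :
    Submodule.span ℝ (Set.range (colE (bmat U hU))) = U :=
  span_colE_eq U (bmat_orth U hU) (bmat_mem U hU) hU

lemma bmat_frob {n d : ℕ} (U : Submodule ℝ (EuclideanSpace ℝ (Fin n)))
    (hU : Module.finrank ℝ U = d) : frobNorm (bmat U hU) = Real.sqrt d := by
  rw [frobNorm, ← trace_transpose_mul, bmat_orth U hU]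
  simp [Matrix.trace_one]

lemma real_star_eq_transpose {d : ℕ} (Q : Matrix (Fin d) (Fin d) ℝ) :
    star Q = Qᵀ := by
  rw [Matrix.star_eq_conjTranspose, Matrix.conjTranspose_eq_transpose_of_trivial]

lemma conj_diag_mul {d : ℕ} {Q : Matrix (Fin d) (Fin d) ℝ} (hQ1 : Qᵀ * Q = 1)
    (v w : Fin d → ℝ) :
    (Q * Matrix.diagonal v * Qᵀ) * (Q * Matrix.diagonal w * Qᵀ) =
      Q * Matrix.diagonal (fun i => v i * w i) * Qᵀ := by
  have : Q * Matrix.diagonal v * Qᵀ * (Q * Matrix.diagonal w * Qᵀ)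
      = Q * Matrix.diagonal v * (Qᵀ * Q) * Matrix.diagonal w * Qᵀ := by
    simp only [Matrix.mul_assoc]
  rw [this, hQ1, Matrix.mul_one, Matrix.mul_assoc Q, Matrix.diagonal_mul_diagonal]

lemma vnorm_sub_comm {m : ℕ} (y z : Fin m → ℝ) : vnorm (y - z) = vnorm (z - y) := by
  rw [vnorm, vnorm]
  congr 1
  refine Finset.sum_congr rfl fun i _ => ?_
  have : (y - z) i = -((z - y) i) := by simp
  rw [this, neg_sq]

lemma inv_sqrt_sub_one_sq_le {t : ℝ} (h : (3/4:ℝ) ≤ Real.sqrt t) (h0 : 0 ≤ t) :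
    ((Real.sqrt t)⁻¹ - 1) ^ 2 ≤ (t - 1) ^ 2 := by
  set s := Real.sqrt t with hs
  have hs0 : (0:ℝ) < s := lt_of_lt_of_le (by norm_num) h
  have hst : s ^ 2 = t := Real.sq_sqrt h0
  have key : (s⁻¹ - 1) ^ 2 * (s * (s + 1)) ^ 2 = (t - 1) ^ 2 := by
    rw [← hst]
    field_simp
    ring
  have h1 : (1:ℝ) ≤ (s * (s + 1)) ^ 2 := by nlinarith
  nlinarith [sq_nonneg (s⁻¹ - 1)]

lemma frobNorm_of_orth {n d : ℕ} {B : Matrix (Fin n) (Fin d) ℝ} (hB : Bᵀ * B = 1) :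
    frobNorm B = Real.sqrt d := by
  rw [frobNorm, ← trace_transpose_mul, hB]
  simp [Matrix.trace_one]

lemma eigenvalues_eq_real {d : ℕ} {G : Matrix (Fin d) (Fin d) ℝ} (hGh : G.IsHermitian)
    (i : Fin d) :
    hGh.eigenvalues i = ⇑(hGh.eigenvectorBasis i) ⬝ᵥ (G *ᵥ ⇑(hGh.eigenvectorBasis i)) := by
  rw [hGh.eigenvalues_eq i]
  simp

lemma vnorm_eigenvectorBasis {d : ℕ} {G : Matrix (Fin d) (Fin d) ℝ} (hGh : G.IsHermitian)
    (i : Fin d) : vnorm ⇑(hGh.eigenvectorBasis i) = 1 := by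
  rw [vnorm_eq]
  have h := hGh.eigenvectorBasis.orthonormal.1 i
  simpa using h

lemma vnorm_orth_mulVec {n d : ℕ} {B : Matrix (Fin n) (Fin d) ℝ} (hB : Bᵀ * B = 1)
    (x : Fin d → ℝ) : vnorm (B *ᵥ x) = vnorm x := by
  have e1 : x ⬝ᵥ ((Bᵀ * B) *ᵥ x) = (B *ᵥ x) ⬝ᵥ (B *ᵥ x) := by
    rw [← Matrix.mulVec_mulVec, Matrix.dotProduct_mulVec, Matrix.vecMul_transpose]
  rw [hB, Matrix.one_mulVec] at e1
  rw [vnorm, vnorm]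
  congr 1
  rw [show ∑ k, (B *ᵥ x) k ^ 2 = (B *ᵥ x) ⬝ᵥ (B *ᵥ x) by
    rw [dotProduct]; exact Finset.sum_congr rfl fun k _ => pow_two _]
  rw [← e1, dotProduct]
  exact Finset.sum_congr rfl fun k _ => (pow_two _).symm

lemma construct {n d : ℕ} (B V : Matrix (Fin n) (Fin d) ℝ) (hBo : Bᵀ * B = 1)
    {ε : ℝ} (hop : ∀ x : Fin d → ℝ, vnorm ((V - B) *ᵥ x) ≤ ε * vnorm x)
    (hfVB : frobNorm (V - B) ≤ Real.sqrt d * ε) (hε0 : 0 ≤ ε) (hε : ε ≤ 1/4) :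
    ∃ S : Matrix (Fin d) (Fin d) ℝ, (V * S)ᵀ * (V * S) = 1 ∧
      frobNorm (V * S - B) ≤ 4 * d * ε := by
  have hd0 : (0:ℝ) ≤ (d:ℝ) := Nat.cast_nonneg d
  have hsd : Real.sqrt d * Real.sqrt d = (d:ℝ) := Real.mul_self_sqrt hd0
  have hfB : frobNorm B = Real.sqrt d := frobNorm_of_orth hBo
  have hGh : (Vᵀ * V).IsHermitian := by
    have h := Matrix.isHermitian_conjTranspose_mul_self V
    rwa [Matrix.conjTranspose_eq_transpose_of_trivial] at h
  set G := Vᵀ * V with hGdef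
  set μ := hGh.eigenvalues with hμdef
  have hμlb : ∀ i, (3/4:ℝ)^2 ≤ μ i := by
    intro i
    have hx1 : vnorm ⇑(hGh.eigenvectorBasis i) = 1 := vnorm_eigenvectorBasis hGh i
    have hμeq : μ i = vnorm (V *ᵥ ⇑(hGh.eigenvectorBasis i)) ^ 2 := by
      have hGm : G *ᵥ ⇑(hGh.eigenvectorBasis i) = Vᵀ *ᵥ (V *ᵥ ⇑(hGh.eigenvectorBasis i)) :=
        (Matrix.mulVec_mulVec (hGh.eigenvectorBasis i) Vᵀ V).symm
      rw [hμdef, eigenvalues_eq_real hGh i, sq_vnorm, hGm,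
        Matrix.dotProduct_mulVec, Matrix.vecMul_transpose, dotProduct]
      exact Finset.sum_congr rfl fun k _ => (pow_two _).symm
    have hBx : vnorm (B *ᵥ ⇑(hGh.eigenvectorBasis i)) = 1 := by
      rw [vnorm_orth_mulVec hBo, hx1]
    have hΔx : vnorm ((V - B) *ᵥ ⇑(hGh.eigenvectorBasis i)) ≤ ε := by
      have := hop ⇑(hGh.eigenvectorBasis i)
      rw [hx1, mul_one] at this
      exact this
    have hlow : 3/4 ≤ vnorm (V *ᵥ ⇑(hGh.eigenvectorBasis i)) := by
      have h3 := vnorm_lower (V *ᵥ ⇑(hGh.eigenvectorBasis i)) (B *ᵥ ⇑(hGh.eigenvectorBasis i))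
      have h4 : vnorm (B *ᵥ ⇑(hGh.eigenvectorBasis i) - V *ᵥ ⇑(hGh.eigenvectorBasis i)) ≤ ε := by
        rw [vnorm_sub_comm, ← Matrix.sub_mulVec]
        exact hΔx
      rw [hBx] at h3
      linarith
    rw [hμeq]
    exact pow_le_pow_left₀ (by norm_num) hlow 2
  have hμ0 : ∀ i, 0 ≤ μ i := fun i => le_trans (by norm_num) (hμlb i)
  have hsμ : ∀ i, (3/4:ℝ) ≤ Real.sqrt (μ i) := fun i =>
    Real.le_sqrt' (by norm_num) |>.mpr (hμlb i)
  set Q : Matrix (Fin d) (Fin d) ℝ := ↑(hGh.eigenvectorUnitary) with hQdef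
  have hQmem := hGh.eigenvectorUnitary.2
  rw [Unitary.mem_iff] at hQmem
  have hQ1 : Qᵀ * Q = 1 := by rw [← real_star_eq_transpose]; exact hQmem.1
  have hQ2 : Q * Qᵀ = 1 := by rw [← real_star_eq_transpose]; exact hQmem.2
  have hspec : G = Q * Matrix.diagonal μ * Qᵀ := by
    have h := hGh.spectral_theorem
    rw [Unitary.conjStarAlgAut_apply, real_star_eq_transpose] at h
    simpa using h
  refine ⟨Q * Matrix.diagonal (fun i => (Real.sqrt (μ i))⁻¹) * Qᵀ, ?_, ?_⟩
  all_goals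
    set S := Q * Matrix.diagonal (fun i => (Real.sqrt (μ i))⁻¹) * Qᵀ with hSdef
  · -- orthonormality
    have hSt : Sᵀ = S := by
      rw [hSdef]
      simp only [Matrix.transpose_mul, Matrix.transpose_transpose, Matrix.diagonal_transpose]
      rw [Matrix.mul_assoc]
    have hSGS : S * G * S = 1 := by
      rw [hspec, hSdef, conj_diag_mul hQ1, conj_diag_mul hQ1]
      have hone : (fun i => (Real.sqrt (μ i))⁻¹ * μ i * (Real.sqrt (μ i))⁻¹) = fun _ => (1:ℝ) := by
        funext i
        have h0 : Real.sqrt (μ i) ≠ 0 := by have := hsμ i; positivity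
        have h1 : μ i = Real.sqrt (μ i) * Real.sqrt (μ i) := (Real.mul_self_sqrt (hμ0 i)).symm
        rw [h1]
        field_simp
        rw [Real.sqrt_sq (Real.sqrt_nonneg _)]
      rw [hone, Matrix.diagonal_one, Matrix.mul_one, hQ2]
    rw [Matrix.transpose_mul]
    calc Sᵀ * Vᵀ * (V * S) = Sᵀ * (Vᵀ * V) * S := by simp only [Matrix.mul_assoc]
      _ = S * G * S := by rw [hSt, hGdef]
      _ = 1 := hSGS
  · -- norm bound
    have hfS : frobNorm S ≤ 4/3 * Real.sqrt d := by
      rw [hSdef, frobNorm_conj hQ1, frobNorm_diagonal]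
      have hsum : ∑ i, ((Real.sqrt (μ i))⁻¹) ^ 2 ≤ (d:ℝ) * (4/3)^2 := by
        calc ∑ i, ((Real.sqrt (μ i))⁻¹) ^ 2 ≤ ∑ _i : Fin d, ((4:ℝ)/3)^2 := by
              refine Finset.sum_le_sum fun i _ => ?_
              have h1 := hsμ i
              have h2 : (Real.sqrt (μ i))⁻¹ ≤ (3/4:ℝ)⁻¹ :=
                inv_anti₀ (by norm_num) h1
              have h3 : 0 ≤ (Real.sqrt (μ i))⁻¹ := by positivity
              rw [show ((3:ℝ)/4)⁻¹ = 4/3 by norm_num] at h2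
              nlinarith
          _ = (d:ℝ) * (4/3)^2 := by
              rw [Finset.sum_const, Finset.card_univ, Fintype.card_fin, nsmul_eq_mul]
      calc Real.sqrt (∑ i, ((Real.sqrt (μ i))⁻¹) ^ 2) ≤ Real.sqrt ((d:ℝ) * (4/3)^2) :=
            Real.sqrt_le_sqrt hsum
        _ = 4/3 * Real.sqrt d := by
            rw [Real.sqrt_mul hd0, Real.sqrt_sq (by norm_num)]; ring
    have hone' : (1 : Matrix (Fin d) (Fin d) ℝ) = Q * Matrix.diagonal (fun _ => (1:ℝ)) * Qᵀ := by
      rw [Matrix.diagonal_one, Matrix.mul_one, hQ2]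
    have hfS1 : frobNorm (S - 1) ≤ frobNorm (G - 1) := by
      have e1 : S - 1 = Q * Matrix.diagonal (fun i => (Real.sqrt (μ i))⁻¹ - 1) * Qᵀ := by
        rw [hSdef]
        conv_lhs => rw [hone']
        rw [← Matrix.sub_mul, ← Matrix.mul_sub, Matrix.diagonal_sub]
      have e2 : G - 1 = Q * Matrix.diagonal (fun i => μ i - 1) * Qᵀ := by
        rw [hspec]
        conv_lhs => rw [hone']
        rw [← Matrix.sub_mul, ← Matrix.mul_sub, Matrix.diagonal_sub]
      rw [e1, e2, frobNorm_conj hQ1, frobNorm_conj hQ1, frobNorm_diagonal, frobNorm_diagonal]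
      apply Real.sqrt_le_sqrt
      exact Finset.sum_le_sum fun i _ => inv_sqrt_sub_one_sq_le (hsμ i) (hμ0 i)
    have hfV : frobNorm V ≤ 5/4 * Real.sqrt d := by
      have hV' : V = (V - B) + B := by abel
      rw [hV']
      calc frobNorm ((V - B) + B) ≤ frobNorm (V - B) + frobNorm B := frobNorm_add_le _ _
        _ ≤ Real.sqrt d * ε + Real.sqrt d := by rw [hfB]; linarith
        _ ≤ 5/4 * Real.sqrt d := by nlinarith [Real.sqrt_nonneg (d:ℝ)]
    have hfG1 : frobNorm (G - 1) ≤ 9/4 * ((d:ℝ) * ε) := by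
      have e3 : G - 1 = Vᵀ * (V - B) + (V - B)ᵀ * B := by
        rw [Matrix.mul_sub, Matrix.transpose_sub, Matrix.sub_mul, hGdef, ← hBo]
        abel
      rw [e3]
      calc frobNorm (Vᵀ * (V - B) + (V - B)ᵀ * B)
          ≤ frobNorm (Vᵀ * (V - B)) + frobNorm ((V - B)ᵀ * B) := frobNorm_add_le _ _
        _ ≤ frobNorm Vᵀ * frobNorm (V - B) + frobNorm (V - B)ᵀ * frobNorm B := by
            have g1 := frobNorm_mul_le Vᵀ (V - B)
            have g2 := frobNorm_mul_le (V - B)ᵀ B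
            linarith
        _ ≤ 5/4 * Real.sqrt d * (Real.sqrt d * ε) + Real.sqrt d * ε * Real.sqrt d := by
            rw [frobNorm_transpose, frobNorm_transpose, hfB]
            have g1 : 0 ≤ frobNorm (V - B) := frobNorm_nonneg _
            have g2 : 0 ≤ frobNorm V := frobNorm_nonneg _
            have g3 : 0 ≤ Real.sqrt d := Real.sqrt_nonneg _
            nlinarith
        _ = 9/4 * ((d:ℝ) * ε) := by
            rw [show 5/4 * Real.sqrt d * (Real.sqrt d * ε)
                = 5/4 * (Real.sqrt d * Real.sqrt d) * ε by ring,
              show Real.sqrt d * ε * Real.sqrt d = (Real.sqrt d * Real.sqrt d) * ε by ring, hsd]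
            ring
    have hdecomp : V * S - B = (V - B) * S + B * (S - 1) := by
      rw [Matrix.sub_mul, Matrix.mul_sub, Matrix.mul_one]
      abel
    calc frobNorm (V * S - B) = frobNorm ((V - B) * S + B * (S - 1)) := by rw [hdecomp]
      _ ≤ frobNorm ((V - B) * S) + frobNorm (B * (S - 1)) := frobNorm_add_le _ _
      _ ≤ frobNorm (V - B) * frobNorm S + frobNorm (S - 1) := by
          have g1 := frobNorm_mul_le (V - B) S
          have g2 : frobNorm (B * (S - 1)) = frobNorm (S - 1) := frobNorm_left_orth hBo _
          linarith
      _ ≤ Real.sqrt d * ε * (4/3 * Real.sqrt d) + 9/4 * ((d:ℝ) * ε) := by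
          have g1 : 0 ≤ frobNorm (V - B) := frobNorm_nonneg _
          have g2 : 0 ≤ frobNorm S := frobNorm_nonneg _
          have g3 : 0 ≤ Real.sqrt d := Real.sqrt_nonneg _
          nlinarith [hfS, hfVB, hfS1.trans hfG1]
      _ ≤ 4 * (d:ℝ) * ε := by
          rw [show Real.sqrt d * ε * (4/3 * Real.sqrt d)
              = 4/3 * (Real.sqrt d * Real.sqrt d) * ε by ring, hsd]
          nlinarith

/-- Close subspaces admit close orthonormal bases: there is a universal
constant `C > 0` such that for any `d`-dimensional subspaces `W, W̃ ≤ ℝⁿ` with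
`‖proj(W) − proj(W̃)‖_F ≤ 1`, there are matrices `B, B̃` with orthonormal
columns spanning `W` and `W̃` respectively such that
`‖B̃ − B‖_F ≤ C·d·‖proj(W̃) − proj(W)‖_F`. -/
theorem close_subspaces_close_bases :
    ∃ C : ℝ, 0 < C ∧
      ∀ (n d : ℕ) (W Wt : Submodule ℝ (EuclideanSpace ℝ (Fin n))),
        Module.finrank ℝ W = d → Module.finrank ℝ Wt = d →
        frobNorm (projMat n W - projMat n Wt) ≤ 1 →
        ∃ B Bt : Matrix (Fin n) (Fin d) ℝ,
          Bᵀ * B = 1 ∧ Btᵀ * Bt = 1 ∧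
          Submodule.span ℝ (Set.range fun j : Fin d =>
            ((WithLp.equiv 2 (Fin n → ℝ)).symm (fun i => B i j) :
              EuclideanSpace ℝ (Fin n))) = W ∧
          Submodule.span ℝ (Set.range fun j : Fin d =>
            ((WithLp.equiv 2 (Fin n → ℝ)).symm (fun i => Bt i j) :
              EuclideanSpace ℝ (Fin n))) = Wt ∧
          frobNorm (Bt - B) ≤ C * d * frobNorm (projMat n Wt - projMat n W) := by
  refine ⟨16, by norm_num, fun n d W Wt hW hWt _hle => ?_⟩
  have hε0 : 0 ≤ frobNorm (projMat n Wt - projMat n W) := frobNorm_nonneg _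
  have hd0 : (0:ℝ) ≤ (d:ℝ) := Nat.cast_nonneg d
  have hsdled : Real.sqrt d ≤ (d:ℝ) := by
    rcases Nat.eq_zero_or_pos d with h | h
    · simp [h]
    · have h1 : (1:ℝ) ≤ (d:ℝ) := by exact_mod_cast h
      nlinarith [Real.sq_sqrt hd0, Real.sqrt_nonneg (d:ℝ)]
  by_cases hcase : frobNorm (projMat n Wt - projMat n W) ≤ 1/4
  · -- main case
    have hBo : (bmat W hW)ᵀ * bmat W hW = 1 := bmat_orth W hW
    have hPB : projMat n W * bmat W hW = bmat W hW := by
      ext i j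
      show (projMat n W *ᵥ ((colE (bmat W hW) j : EuclideanSpace ℝ (Fin n)) : Fin n → ℝ)) i
        = bmat W hW i j
      rw [projMat_fix W (colE (bmat W hW) j) (bmat_mem W hW j)]
      rfl
    have hVBmat : projMat n Wt * bmat W hW - bmat W hW
        = (projMat n Wt - projMat n W) * bmat W hW := by
      rw [Matrix.sub_mul, hPB]
    have hop : ∀ x : Fin d → ℝ, vnorm ((projMat n Wt * bmat W hW - bmat W hW) *ᵥ x)
        ≤ frobNorm (projMat n Wt - projMat n W) * vnorm x := by
      intro x
      rw [hVBmat, ← Matrix.mulVec_mulVec]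
      calc vnorm ((projMat n Wt - projMat n W) *ᵥ (bmat W hW *ᵥ x))
          ≤ frobNorm (projMat n Wt - projMat n W) * vnorm (bmat W hW *ᵥ x) :=
            vnorm_mulVec_le _ _
        _ = frobNorm (projMat n Wt - projMat n W) * vnorm x := by
            rw [vnorm_orth_mulVec hBo]
    have hfVB : frobNorm (projMat n Wt * bmat W hW - bmat W hW)
        ≤ Real.sqrt d * frobNorm (projMat n Wt - projMat n W) := by
      rw [hVBmat]
      calc frobNorm ((projMat n Wt - projMat n W) * bmat W hW)
          ≤ frobNorm (projMat n Wt - projMat n W) * frobNorm (bmat W hW) :=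
            frobNorm_mul_le _ _
        _ = Real.sqrt d * frobNorm (projMat n Wt - projMat n W) := by
            rw [bmat_frob, mul_comm]
    obtain ⟨S, hBto, hbound⟩ := construct (bmat W hW) (projMat n Wt * bmat W hW) hBo
      hop hfVB hε0 hcase
    have hVmem : ∀ j, colE (projMat n Wt * bmat W hW) j ∈ Wt := by
      intro j
      have h1 : colE (projMat n Wt * bmat W hW) j = (WithLp.equiv 2 (Fin n → ℝ)).symm
          (projMat n Wt *ᵥ ((colE (bmat W hW) j : EuclideanSpace ℝ (Fin n)) : Fin n → ℝ)) := rfl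
      rw [h1]
      exact projMat_mem Wt (colE (bmat W hW) j)
    have hBtmem : ∀ j, colE (projMat n Wt * bmat W hW * S) j ∈ Wt := by
      intro j
      have h1 : colE (projMat n Wt * bmat W hW * S) j
          = ∑ k, S k j • colE (projMat n Wt * bmat W hW) k := by
        ext i
        rw [WithLp.ofLp_sum, Finset.sum_apply]
        simp only [PiLp.smul_apply, smul_eq_mul]
        rw [show (colE (projMat n Wt * bmat W hW * S) j) i
          = (projMat n Wt * bmat W hW * S) i j from rfl]
        rw [Matrix.mul_apply]
        exact Finset.sum_congr rfl fun k _ => by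
          rw [show (colE (projMat n Wt * bmat W hW) k) i
            = (projMat n Wt * bmat W hW) i k from rfl]; ring
      rw [h1]
      exact Submodule.sum_mem _ fun k _ => Submodule.smul_mem _ _ (hVmem k)
    refine ⟨bmat W hW, projMat n Wt * bmat W hW * S, hBo, hBto, bmat_span W hW,
      span_colE_eq Wt hBto hBtmem hWt, ?_⟩
    have : (0:ℝ) ≤ (d:ℝ) * frobNorm (projMat n Wt - projMat n W) := by positivity
    linarith [hbound]
  · -- trivial case
    push_neg at hcase
    refine ⟨bmat W hW, bmat Wt hWt, bmat_orth W hW, bmat_orth Wt hWt,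
      bmat_span W hW, bmat_span Wt hWt, ?_⟩
    calc frobNorm (bmat Wt hWt - bmat W hW)
        ≤ frobNorm (bmat Wt hWt) + frobNorm (bmat W hW) := frobNorm_sub_le _ _
      _ = 2 * Real.sqrt d := by rw [bmat_frob, bmat_frob]; ring
      _ ≤ 16 * (d:ℝ) * frobNorm (projMat n Wt - projMat n W) := by nlinarith
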